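/- Let $x_0,\dots,x_n:[0,\infty)\to\mathbb{R}$ be Lipschitz with constant $v_{\max}$ (particle paths), and with gaps bounded below by $\ell/R_{\max}$. Define the pseudo-inverse $X(t,z)=x_i(t)+(z-i\ell)\,(x_{i+1}(t)-x_i(t))/\ell$ for $z\in[i\ell,(i+1)\ell]$, $i=0,\dots,n-1$, $\ell=L/n$. Then for all $0\le s\le t$, $\int_0^L |X(t,z)-X(s,z)|\,dz \le 2 L\, v_{\max}\,(t-s)$. (Uniform Lipschitz-in-time estimate in the 1-Wasserstein distance for the empirical densities.) -/

import Mathlib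

open intervalIntegral

/-- Uniform Lipschitz-in-time estimate in the 1-Wasserstein distance for the
empirical densities of the many-particle scheme, expressed through the
pseudo-inverse distribution functions. -/
theorem stmt_6 (n : ℕ) (hn : 0 < n) (L vmax Rmax : ℝ)
    (hL : 0 < L) (hvmax : 0 ≤ vmax) (hRmax : 0 < Rmax)
    (x : ℕ → ℝ → ℝ)
    (hLip : ∀ i ≤ n, ∀ s t : ℝ, |x i t - x i s| ≤ vmax * |t - s|)
    (hgap : ∀ t : ℝ, ∀ i < n, (L / n) / Rmax ≤ x (i+1) t - x i t)
    (X : ℝ → ℝ → ℝ)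
    (hX : ∀ t : ℝ, ∀ i < n, ∀ z ∈ Set.Icc ((i:ℝ) * (L / n)) (((i:ℝ)+1) * (L / n)),
      X t z = x i t + (z - i * (L / n)) * (x (i+1) t - x i t) / (L / n)) :
    ∀ s t : ℝ, 0 ≤ s → s ≤ t →
      (∫ z in (0:ℝ)..L, |X t z - X s z|) ≤ 2 * L * vmax * (t - s) := by
  intro s t hs hst
  set ℓ : ℝ := L / n with hℓdef
  have hnR : (0:ℝ) < n := by exact_mod_cast hn
  have hℓ : 0 < ℓ := div_pos hL hnR
  set C : ℝ := vmax * (t - s) with hCdef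
  have hC : 0 ≤ C := mul_nonneg hvmax (by linarith)
  -- per-particle bound
  have hA : ∀ i ≤ n, |x i t - x i s| ≤ C := by
    intro i hi
    have := hLip i hi s t
    rwa [abs_of_nonneg (by linarith : (0:ℝ) ≤ t - s)] at this
  -- the affine function on each piece
  set f : ℕ → ℝ → ℝ := fun i z =>
    (x i t - x i s) + (z - i * ℓ) * ((x (i+1) t - x (i+1) s) - (x i t - x i s)) / ℓ
    with hfdef
  have hEq : ∀ i < n, ∀ z ∈ Set.Icc ((i:ℝ) * ℓ) (((i:ℝ)+1) * ℓ),
      X t z - X s z = f i z := by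
    intro i hi z hz
    rw [hX t i hi z hz, hX s i hi z hz]
    simp only [hfdef]
    field_simp
    ring
  have hfle : ∀ i < n, ∀ z ∈ Set.Icc ((i:ℝ) * ℓ) (((i:ℝ)+1) * ℓ), |f i z| ≤ C := by
    intro i hi z hz
    set θ : ℝ := (z - i * ℓ) / ℓ with hθdef
    have hθ0 : 0 ≤ θ := div_nonneg (by linarith [hz.1]) hℓ.le
    have hθ1 : θ ≤ 1 := by
      rw [div_le_one hℓ]
      have := hz.2; linarith
    set A : ℝ := x i t - x i s
    set B : ℝ := x (i+1) t - x (i+1) s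
    have hAle : |A| ≤ C := hA i (le_of_lt hi)
    have hBle : |B| ≤ C := hA (i+1) hi
    have hf : f i z = (1 - θ) * A + θ * B := by
      simp only [hfdef, hθdef]
      field_simp
      ring
    rw [hf]
    calc |(1 - θ) * A + θ * B| ≤ |(1 - θ) * A| + |θ * B| := abs_add_le _ _
      _ = (1 - θ) * |A| + θ * |B| := by
          rw [abs_mul, abs_mul, abs_of_nonneg (by linarith), abs_of_nonneg hθ0]
      _ ≤ (1 - θ) * C + θ * C := by
          exact add_le_add (mul_le_mul_of_nonneg_left hAle (by linarith))
            (mul_le_mul_of_nonneg_left hBle hθ0)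
      _ = C := by ring
  have hkey : ∀ i < n,
      IntervalIntegrable (fun z => |X t z - X s z|) MeasureTheory.volume
        ((i:ℝ) * ℓ) (((i:ℝ)+1) * ℓ) ∧
      (∫ z in ((i:ℝ) * ℓ)..(((i:ℝ)+1) * ℓ), |X t z - X s z|) ≤ ℓ * C := by
    intro i hi
    have hab : (i:ℝ) * ℓ ≤ ((i:ℝ)+1) * ℓ := by nlinarith [hℓ.le]
    have hcontf : Continuous fun z => |f i z| := by
      simp only [hfdef]
      fun_prop
    have hEqOn : Set.EqOn (fun z => |f i z|) (fun z => |X t z - X s z|)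
        (Set.Icc ((i:ℝ) * ℓ) (((i:ℝ)+1) * ℓ)) := by
      intro z hz
      simp only [hEq i hi z hz]
    have hint : IntervalIntegrable (fun z => |X t z - X s z|) MeasureTheory.volume
        ((i:ℝ) * ℓ) (((i:ℝ)+1) * ℓ) := by
      rw [intervalIntegrable_iff_integrableOn_Ioc_of_le hab]
      exact (hcontf.integrableOn_Ioc).congr_fun
        (hEqOn.mono Set.Ioc_subset_Icc_self) measurableSet_Ioc
    refine ⟨hint, ?_⟩
    have hcongr : (∫ z in ((i:ℝ) * ℓ)..(((i:ℝ)+1) * ℓ), |X t z - X s z|)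
        = ∫ z in ((i:ℝ) * ℓ)..(((i:ℝ)+1) * ℓ), |f i z| := by
      apply intervalIntegral.integral_congr
      rw [Set.uIcc_of_le hab]
      exact hEqOn.symm
    rw [hcongr]
    have hbound := intervalIntegral.norm_integral_le_of_norm_le_const
      (C := C) (f := fun z => |f i z|) (a := (i:ℝ) * ℓ) (b := ((i:ℝ)+1) * ℓ)
      (fun z hz => by
        rw [Set.uIoc_of_le hab] at hz
        rw [Real.norm_eq_abs, abs_abs]
        exact hfle i hi z (Set.Ioc_subset_Icc_self hz))
    have habs : |((i:ℝ)+1) * ℓ - (i:ℝ) * ℓ| = ℓ := by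
      rw [abs_of_nonneg (by linarith)]; ring
    rw [Real.norm_eq_abs, habs] at hbound
    have h2 : (∫ z in ((i:ℝ) * ℓ)..(((i:ℝ)+1) * ℓ), |f i z|) ≤ C * ℓ :=
      le_trans (le_abs_self _) hbound
    linarith [h2, mul_comm C ℓ]
  -- sum over the pieces
  have hadj := intervalIntegral.sum_integral_adjacent_intervals
    (μ := MeasureTheory.volume) (f := fun z => |X t z - X s z|)
    (a := fun k => (k:ℝ) * ℓ) (n := n)
    (fun k hk => by
      have h := (hkey k hk).1
      push_cast
      exact h)
  have han : ((n:ℕ):ℝ) * ℓ = L := by rw [hℓdef]; field_simp [hnR.ne']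
  rw [show (0:ℝ) = ((0:ℕ):ℝ) * ℓ by norm_num, show L = ((n:ℕ):ℝ) * ℓ from han.symm,
    ← hadj]
  have hstep : ∀ k ∈ Finset.range n,
      (∫ z in (((k:ℕ):ℝ) * ℓ)..((((k+1:ℕ)):ℝ) * ℓ), |X t z - X s z|) ≤ ℓ * C := by
    intro k hk
    have h := (hkey k (Finset.mem_range.mp hk)).2
    push_cast
    exact h
  refine le_trans (Finset.sum_le_sum hstep) ?_
  rw [Finset.sum_const, Finset.card_range, nsmul_eq_mul]
  have hnl : (n:ℝ) * ℓ = L := han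
  have hLC : (n:ℝ) * (ℓ * C) = L * C := by rw [← mul_assoc, hnl]
  rw [hLC, hCdef]
  nlinarith [mul_nonneg hL.le hC]
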